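/- Define u₀ := 0, u_{n+1} := L(u_n), and let u(x) := Σ_{j=1}^{∞} i_j(x)·4^{−j} on [0,1)². Then for every n ∈ ℕ and every x ∈ [0,1)² one has 0 ≤ u(x) − u_n(x) < 4^{−n}. In particular, u_n converges to u uniformly on [0,1)². -/

import Mathlib

open MeasureTheory Set Filter
open scoped ENNReal NNReal

noncomputable section

/-- The half-open unit square `[0,1)²` in `ℝ²`. -/
def unitSq : Set (ℝ × ℝ) := Set.Ico (0:ℝ) 1 ×ˢ Set.Ico (0:ℝ) 1

/-- The four contractions `B₀, B₁, B₂, B₃` mapping `[0,1)²` onto its four half-open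
dyadic subsquares (lower-left, lower-right, upper-left, upper-right). -/
def Bmap (i : Fin 4) (x : ℝ × ℝ) : ℝ × ℝ :=
  (x.1 / 2 + (if i.val % 2 = 1 then (1:ℝ)/2 else 0),
   x.2 / 2 + (if 2 ≤ i.val then (1:ℝ)/2 else 0))

/-- The inverse maps `A₀, A₁, A₂, A₃` of `B₀, …, B₃`. -/
def Amap (i : Fin 4) (x : ℝ × ℝ) : ℝ × ℝ :=
  (2 * x.1 - (if i.val % 2 = 1 then (1:ℝ) else 0),
   2 * x.2 - (if 2 ≤ i.val then (1:ℝ) else 0))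

/-- The four half-open dyadic subsquares `Q₀, Q₁, Q₂, Q₃` of `[0,1)²`. -/
def Qsub (i : Fin 4) : Set (ℝ × ℝ) := Bmap i '' unitSq

/-- The step function `ū = Σ_{i=0}^{3} (i/4)·1_{Q_i}`. -/
def ubar (x : ℝ × ℝ) : ℝ :=
  ∑ i : Fin 4, ((i.val : ℝ) / 4) * (Qsub i).indicator (fun _ => (1:ℝ)) x

/-- The operator `L`: `(Lv)(x) = ū(x) + (1/4) Σ_i v(A_i x)·1_{Q_i}(x)` on `[0,1)²`,
extended by `0` outside. -/
def Lop (v : ℝ × ℝ → ℝ) : ℝ × ℝ → ℝ :=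
  unitSq.indicator fun x =>
    ubar x + (1/4) * ∑ i : Fin 4, (Qsub i).indicator (fun y => v (Amap i y)) x

/-- The `j`-th binary digit `a_j(s) = ⌊2^j s⌋ − 2⌊2^{j−1} s⌋` of `s ∈ [0,1)` (`j ≥ 1`). -/
def bdigit (j : ℕ) (s : ℝ) : ℤ := ⌊(2:ℝ)^j * s⌋ - 2 * ⌊(2:ℝ)^(j-1) * s⌋

/-- The `j`-th quadrant digit `i_j(x) = a_j(x₁) + 2 a_j(x₂) ∈ {0,1,2,3}` of `x ∈ [0,1)²`. -/
def qdigit (j : ℕ) (x : ℝ × ℝ) : ℤ := bdigit j x.1 + 2 * bdigit j x.2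

/-- The Flat Mountain function `u(x) = Σ_{j≥1} i_j(x)·4^{−j}` on `[0,1)²`, `0` outside. -/
def uFM : ℝ × ℝ → ℝ :=
  unitSq.indicator fun x => ∑' j : ℕ, (qdigit (j+1) x : ℝ) / 4^(j+1)

/-- The iterates `u₀ = 0`, `u_{n+1} = L u_n`. -/
def uIter : ℕ → ℝ × ℝ → ℝ
  | 0 => fun _ => 0
  | (n+1) => Lop (uIter n)

/-- The dyadic square `Q_{i₁,…,i_n} = B_{i₁} ∘ ⋯ ∘ B_{i_n} ([0,1)²)` indexed by a finite
sequence of quadrant digits. -/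
def Qseq : List (Fin 4) → Set (ℝ × ℝ)
  | [] => unitSq
  | (i :: l) => Bmap i '' Qseq l

/-- The `j`-th base-4 digit `t_j = ⌊4^j t⌋ − 4⌊4^{j−1} t⌋` of `t ∈ [0,1)` (`j ≥ 1`). -/
def tdigit (j : ℕ) (t : ℝ) : ℤ := ⌊(4:ℝ)^j * t⌋ - 4 * ⌊(4:ℝ)^(j-1) * t⌋

/-- The Lebesgue (Z-order) space-filling curve `γ`. -/
def lcurve (t : ℝ) : ℝ × ℝ :=
  (∑' j : ℕ, ((tdigit (j+1) t % 2 : ℤ) : ℝ) / 2^(j+1),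
   ∑' j : ℕ, ((tdigit (j+1) t / 2 : ℤ) : ℝ) / 2^(j+1))

end

section Aux

lemma floor_double_sub (t : ℝ) : ⌊2*t⌋ - 2*⌊t⌋ = 0 ∨ ⌊2*t⌋ - 2*⌊t⌋ = 1 := by
  have h1 : (2:ℤ)*⌊t⌋ ≤ ⌊2*t⌋ := by
    apply Int.le_floor.2; push_cast; linarith [Int.floor_le t]
  have h2 : ⌊2*t⌋ < 2*⌊t⌋ + 2 := by
    apply Int.floor_lt.2; push_cast; linarith [Int.lt_floor_add_one t]
  omega

lemma bdigit_succ_eq (j : ℕ) (s : ℝ) :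
    bdigit (j+1) s = ⌊2*((2:ℝ)^j*s)⌋ - 2*⌊(2:ℝ)^j*s⌋ := by
  have : (2:ℝ)^(j+1)*s = 2*((2:ℝ)^j*s) := by ring
  simp [bdigit, this]

lemma bdigit_zero_or_one (j : ℕ) (s : ℝ) : bdigit (j+1) s = 0 ∨ bdigit (j+1) s = 1 := by
  rw [bdigit_succ_eq]; exact floor_double_sub _

lemma bdigit_one_eq {s : ℝ} (hs : s ∈ Set.Ico (0:ℝ) 1) : bdigit 1 s = ⌊2*s⌋ := by
  have h0 : ⌊s⌋ = 0 := Int.floor_eq_zero_iff.2 hs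
  simp [bdigit, h0]

lemma bdigit_shift (j : ℕ) {s : ℝ} (hs : s ∈ Set.Ico (0:ℝ) 1) :
    bdigit (j+1) (2*s - (bdigit 1 s : ℝ)) = bdigit (j+2) s := by
  rw [bdigit_one_eq hs]
  have e1 : (2:ℝ)^(j+1)*(2*s - (⌊2*s⌋:ℝ)) = 2^(j+2)*s - ((2^(j+1)*⌊2*s⌋ : ℤ):ℝ) := by
    push_cast; ring
  have e2 : (2:ℝ)^j*(2*s - (⌊2*s⌋:ℝ)) = 2^(j+1)*s - ((2^j*⌊2*s⌋ : ℤ):ℝ) := by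
    push_cast; ring
  have n1 : (j+1) - 1 = j := rfl
  have n2 : (j+2) - 1 = j+1 := rfl
  simp only [bdigit, n1, n2, e1, e2, Int.floor_sub_intCast]
  ring

end Aux

section Quad

noncomputable def rr1 (i : Fin 4) : ℝ := if i.val % 2 = 1 then (1:ℝ)/2 else 0
noncomputable def rr2 (i : Fin 4) : ℝ := if 2 ≤ i.val then (1:ℝ)/2 else 0

lemma Qsub_eq (i : Fin 4) :
    Qsub i = Set.Ico (rr1 i) (rr1 i + 1/2) ×ˢ Set.Ico (rr2 i) (rr2 i + 1/2) := by
  ext ⟨a, b⟩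
  simp only [Qsub, unitSq, Bmap, Set.mem_image, Set.mem_prod, Set.mem_Ico, Prod.mk.injEq,
    Prod.exists]
  constructor
  · rintro ⟨y1, y2, ⟨⟨h1, h2⟩, h3, h4⟩, ha, hb⟩
    rw [← ha, ← hb]
    refine ⟨⟨?_, ?_⟩, ?_, ?_⟩ <;> simp only [rr1, rr2] <;> linarith
  · rintro ⟨⟨h1, h2⟩, h3, h4⟩
    refine ⟨2*(a - rr1 i), 2*(b - rr2 i), ⟨⟨by linarith, by linarith⟩, by linarith, by linarith⟩,
      ?_, ?_⟩ <;> simp only [rr1, rr2] <;> ring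

lemma mem_Qsub_iff (i : Fin 4) {x : ℝ × ℝ} (hx : x ∈ unitSq) :
    x ∈ Qsub i ↔ (⌊2*x.1⌋ = i.val % 2 ∧ ⌊2*x.2⌋ = i.val / 2) := by
  obtain ⟨⟨hx1, hx2⟩, hx3, hx4⟩ := hx
  rw [Qsub_eq]
  fin_cases i <;>
    simp only [Set.mem_prod, Set.mem_Ico, rr1, rr2, Int.floor_eq_iff] <;> push_cast <;>
    norm_num <;>
    (constructor <;> intro h <;> obtain ⟨⟨h1, h2⟩, h3, h4⟩ := h <;>
      refine ⟨⟨by linarith, by linarith⟩, by linarith, by linarith⟩)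

end Quad

section Step

lemma exists_quad {x : ℝ × ℝ} (hx : x ∈ unitSq) :
    ∃ k : Fin 4, x ∈ Qsub k ∧ ((k.val % 2 : ℕ) : ℤ) = bdigit 1 x.1 ∧
      ((k.val / 2 : ℕ) : ℤ) = bdigit 1 x.2 := by
  have e1 : bdigit 1 x.1 = ⌊2*x.1⌋ := bdigit_one_eq hx.1
  have e2 : bdigit 1 x.2 = ⌊2*x.2⌋ := bdigit_one_eq hx.2
  rcases bdigit_zero_or_one 0 x.1 with h1 | h1 <;> rcases bdigit_zero_or_one 0 x.2 with h2 | h2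
  · exact ⟨0, (mem_Qsub_iff 0 hx).2 ⟨by rw [← e1, h1]; rfl, by rw [← e2, h2]; rfl⟩,
      by rw [h1]; rfl, by rw [h2]; rfl⟩
  · exact ⟨2, (mem_Qsub_iff 2 hx).2 ⟨by rw [← e1, h1]; rfl, by rw [← e2, h2]; rfl⟩,
      by rw [h1]; rfl, by rw [h2]; rfl⟩
  · exact ⟨1, (mem_Qsub_iff 1 hx).2 ⟨by rw [← e1, h1]; rfl, by rw [← e2, h2]; rfl⟩,
      by rw [h1]; rfl, by rw [h2]; rfl⟩
  · exact ⟨3, (mem_Qsub_iff 3 hx).2 ⟨by rw [← e1, h1]; rfl, by rw [← e2, h2]; rfl⟩,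
      by rw [h1]; rfl, by rw [h2]; rfl⟩

lemma quad_unique {x : ℝ × ℝ} (hx : x ∈ unitSq) {i k : Fin 4}
    (hi : x ∈ Qsub i) (hk : x ∈ Qsub k) : i = k := by
  obtain ⟨a1, a2⟩ := (mem_Qsub_iff i hx).1 hi
  obtain ⟨b1, b2⟩ := (mem_Qsub_iff k hx).1 hk
  have c1 := a1.symm.trans b1
  have c2 := a2.symm.trans b2
  have hi4 := i.isLt
  have hk4 := k.isLt
  exact Fin.ext (by omega)

end Step

section Step2

lemma shift_mem {s : ℝ} (hs : s ∈ Set.Ico (0:ℝ) 1) :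
    2*s - (bdigit 1 s : ℝ) ∈ Set.Ico (0:ℝ) 1 := by
  rw [bdigit_one_eq hs]
  constructor
  · linarith [Int.floor_le (2*s)]
  · linarith [Int.lt_floor_add_one (2*s)]

lemma amap_eq {x : ℝ × ℝ} {k : Fin 4}
    (hk1 : ((k.val % 2 : ℕ) : ℤ) = bdigit 1 x.1) (hk2 : ((k.val / 2 : ℕ) : ℤ) = bdigit 1 x.2) :
    Amap k x = (2*x.1 - (bdigit 1 x.1 : ℝ), 2*x.2 - (bdigit 1 x.2 : ℝ)) := by
  have hk4 := k.isLt
  unfold Amap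
  refine Prod.ext ?_ ?_ <;> simp only
  · rw [← hk1]; split_ifs with h
    · rw [h]; norm_num
    · have : k.val % 2 = 0 := by omega
      rw [this]; norm_num
  · rw [← hk2]; split_ifs with h
    · have : k.val / 2 = 1 := by omega
      rw [this]; norm_num
    · have : k.val / 2 = 0 := by omega
      rw [this]; norm_num

lemma ubar_eq {x : ℝ × ℝ} (hx : x ∈ unitSq) {k : Fin 4} (hk : x ∈ Qsub k) :
    ubar x = (k.val : ℝ) / 4 := by
  unfold ubar
  rw [Finset.sum_eq_single k]
  · rw [Set.indicator_of_mem hk]; ring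
  · intro i _ hik
    have : x ∉ Qsub i := fun h => hik (quad_unique hx h hk)
    rw [Set.indicator_of_notMem this]; ring
  · intro h; exact absurd (Finset.mem_univ k) h

lemma Lop_eq (v : ℝ × ℝ → ℝ) {x : ℝ × ℝ} (hx : x ∈ unitSq) {k : Fin 4} (hk : x ∈ Qsub k) :
    Lop v x = (k.val : ℝ) / 4 + (1/4) * v (Amap k x) := by
  unfold Lop
  rw [Set.indicator_of_mem hx, ubar_eq hx hk]
  congr 1
  congr 1
  rw [Finset.sum_eq_single k]
  · exact Set.indicator_of_mem hk _
  · intro i _ hik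
    exact Set.indicator_of_notMem (fun h => hik (quad_unique hx h hk)) _
  · intro h; exact absurd (Finset.mem_univ k) h

end Step2

lemma uIter_eq : ∀ n : ℕ, ∀ x ∈ unitSq,
    uIter n x = ∑ j ∈ Finset.range n, (qdigit (j+1) x : ℝ) / 4^(j+1) := by
  intro n
  induction n with
  | zero => intro x _; simp [uIter]
  | succ n ih =>
    intro x hx
    obtain ⟨k, hk, hk1, hk2⟩ := exists_quad hx
    have hAx : Amap k x = (2*x.1 - (bdigit 1 x.1 : ℝ), 2*x.2 - (bdigit 1 x.2 : ℝ)) :=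
      amap_eq hk1 hk2
    have hAmem : Amap k x ∈ unitSq := by
      rw [hAx]; exact ⟨shift_mem hx.1, shift_mem hx.2⟩
    have hqshift : ∀ j : ℕ, qdigit (j+1) (Amap k x) = qdigit (j+2) x := by
      intro j
      rw [hAx]
      unfold qdigit
      simp only
      rw [bdigit_shift j hx.1, bdigit_shift j hx.2]
    have hq1 : (qdigit 1 x : ℤ) = (k.val : ℤ) := by
      unfold qdigit
      rw [← hk1, ← hk2]
      push_cast
      omega
    show Lop (uIter n) x = _
    rw [Lop_eq (uIter n) hx hk, ih _ hAmem, Finset.sum_range_succ']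
    simp only [hqshift]
    rw [Finset.mul_sum]
    have e0 : ((k.val : ℝ)) / 4 = (qdigit (0+1) x : ℝ) / 4^(0+1) := by
      rw [show (0:ℕ)+1 = 1 from rfl]
      have : ((qdigit 1 x : ℤ) : ℝ) = ((k.val : ℤ) : ℝ) := by exact_mod_cast hq1
      rw [this]
      norm_num
    rw [e0, add_comm]
    congr 1
    apply Finset.sum_congr rfl
    intro j _
    have : (4:ℝ)^(j+1+1) = 4^(j+1) * 4 := by rw [pow_succ]
    rw [show j+1+1 = j+2 from rfl] at this
    rw [this]
    ring

lemma qdigit_nonneg (j : ℕ) (x : ℝ × ℝ) : 0 ≤ qdigit (j+1) x := by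
  rcases bdigit_zero_or_one j x.1 with h1 | h1 <;> rcases bdigit_zero_or_one j x.2 with h2 | h2 <;>
    unfold qdigit <;> omega

lemma qdigit_le_three (j : ℕ) (x : ℝ × ℝ) : qdigit (j+1) x ≤ 3 := by
  rcases bdigit_zero_or_one j x.1 with h1 | h1 <;> rcases bdigit_zero_or_one j x.2 with h2 | h2 <;>
    unfold qdigit <;> omega

lemma exists_digit_zero {s : ℝ} (hs : s ∈ Set.Ico (0:ℝ) 1) (n : ℕ) :
    ∃ m, bdigit (m+n+1) s = 0 := by
  by_contra hcon
  push_neg at hcon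
  have hall : ∀ m, bdigit (m+n+1) s = 1 := by
    intro m
    rcases bdigit_zero_or_one (m+n) s with h | h
    · exact absurd h (hcon m)
    · exact h
  set c : ℕ → ℤ := fun m => ⌊(2:ℝ)^(m+n) * s⌋ with hc
  have hrec : ∀ m, c (m+1) = 2 * c m + 1 := by
    intro m
    have h := hall m
    rw [bdigit_succ_eq (m+n) s] at h
    simp only [hc]
    rw [show (m+1)+n = (m+n)+1 from by omega]
    rw [show (2:ℝ)^((m+n)+1) * s = 2*((2:ℝ)^(m+n) * s) from by ring]
    omega
  have hval : ∀ m, c m = 2^m * (c 0 + 1) - 1 := by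
    intro m
    induction m with
    | zero => simp
    | succ m ih => rw [hrec m, ih]; ring
  have hpos : (0:ℝ) < (c 0 + 1 : ℤ) - 2^n * s := by
    simp only [hc, zero_add]
    push_cast
    linarith [Int.lt_floor_add_one ((2:ℝ)^n * s)]
  set δ : ℝ := ((c 0 + 1 : ℤ) : ℝ) - 2^n * s with hδ
  obtain ⟨m, hm⟩ := pow_unbounded_of_one_lt (1/δ) (by norm_num : (1:ℝ) < 2)
  have hub : (c m : ℝ) ≤ 2^(m+n) * s := Int.floor_le _
  rw [hval m] at hub
  push_cast at hub
  have h2 : (2:ℝ)^(m+n) = 2^m * 2^n := pow_add 2 m n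
  rw [h2] at hub
  have key : (2:ℝ)^m * δ ≤ 1 := by
    rw [hδ]
    push_cast
    nlinarith [hub]
  have : (1:ℝ) < 2^m * δ := by
    rw [div_lt_iff₀ hpos] at hm
    · linarith
  linarith

lemma summable_q (x : ℝ × ℝ) : Summable (fun j : ℕ => (qdigit (j+1) x : ℝ) / 4^(j+1)) := by
  apply Summable.of_nonneg_of_le
    (fun j => div_nonneg (by exact_mod_cast qdigit_nonneg j x) (by positivity))
  · intro j
    have h3 := qdigit_le_three j x
    calc (qdigit (j+1) x : ℝ) / 4^(j+1) ≤ 3 / 4^(j+1) := by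
          apply div_le_div_of_nonneg_right ?_ (by positivity)
          · exact_mod_cast h3
      _ = (3/4) * (1/4)^j := by
          rw [pow_succ, div_pow, one_pow]
          field_simp
  · exact (summable_geometric_of_lt_one (by norm_num) (by norm_num)).mul_left _

lemma tsum_three (n : ℕ) : ∑' j : ℕ, (3:ℝ)/4^(j+n+1) = 1/4^n := by
  have e : ∀ j : ℕ, (3:ℝ)/4^(j+n+1) = (3/4^(n+1)) * (1/4)^j := by
    intro j
    rw [div_pow, one_pow, pow_add, pow_succ]
    field_simp
    ring
  simp only [e]
  rw [tsum_mul_left, tsum_geometric_of_lt_one (by norm_num) (by norm_num)]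
  rw [pow_succ]
  norm_num
  ring

lemma summable_three (n : ℕ) : Summable (fun j : ℕ => (3:ℝ)/4^(j+n+1)) := by
  have e : ∀ j : ℕ, (3:ℝ)/4^(j+n+1) = (3/4^(n+1)) * (1/4)^j := by
    intro j
    rw [div_pow, one_pow, pow_add, pow_succ]
    field_simp
    ring
  simp only [e]
  exact (summable_geometric_of_lt_one (by norm_num) (by norm_num)).mul_left _

/-- Part (ii) of the explicit-formula lemma: `0 ≤ u − u_n < 4^{−n}` on `[0,1)²`; in
particular the iterates `u_n` converge uniformly to `u` on `[0,1)²`. -/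
theorem stmt9 (n : ℕ) (x : ℝ × ℝ) (hx : x ∈ unitSq) :
    0 ≤ uFM x - uIter n x ∧ uFM x - uIter n x < 1 / 4 ^ n := by
  set f : ℕ → ℝ := fun j => (qdigit (j+1) x : ℝ) / 4^(j+1) with hfdef
  have hf : Summable f := summable_q x
  have hU : uFM x = ∑' j, f j := Set.indicator_of_mem hx _
  have hI : uIter n x = ∑ j ∈ Finset.range n, f j := uIter_eq n x hx
  have hsplit : (∑ j ∈ Finset.range n, f j) + ∑' j, f (j+n) = ∑' j, f j :=
    Summable.sum_add_tsum_nat_add n hf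
  have hdiff : uFM x - uIter n x = ∑' j, f (j+n) := by
    rw [hU, hI, ← hsplit]; ring
  have hnn : ∀ j : ℕ, 0 ≤ f (j+n) := fun j =>
    div_nonneg (by exact_mod_cast qdigit_nonneg (j+n) x) (by positivity)
  constructor
  · rw [hdiff]
    exact tsum_nonneg hnn
  · rw [hdiff]
    obtain ⟨m, hm⟩ := exists_digit_zero hx.1 n
    have hle : ∀ j : ℕ, f (j+n) ≤ (3:ℝ)/4^(j+n+1) := by
      intro j
      apply div_le_div_of_nonneg_right ?_ (by positivity)
      exact_mod_cast qdigit_le_three (j+n) x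
    have hstrict : f (m+n) < (3:ℝ)/4^(m+n+1) := by
      have h2 : qdigit (m+n+1) x ≤ 2 := by
        have := bdigit_zero_or_one (m+n) x.2
        unfold qdigit
        omega
      have h3 : (qdigit (m+n+1) x : ℝ) < 3 := by exact_mod_cast lt_of_le_of_lt h2 (by norm_num)
      exact (div_lt_div_iff_of_pos_right (by positivity)).2 h3
    calc ∑' j, f (j+n) < ∑' j, (3:ℝ)/4^(j+n+1) :=
          Summable.tsum_lt_tsum_of_nonneg hnn hle hstrict (summable_three n)
      _ = 1/4^n := tsum_three n
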